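/- If there exists a Hadamard matrix of order 8t+4 (t a positive integer), then there exists a (4t+1, 2t+1, 2t+1)-BIBD, and hence an OA_{2t+1}(4t+1,2) with a row repeated 2 times. -/

import Mathlib

open Finset

def IsOA (lam k n : ℕ) (A : Fin (lam * n ^ 2) → Fin k → Fin n) : Prop :=
  ∀ c₁ c₂ : Fin k, c₁ ≠ c₂ → ∀ x y : Fin n,
    (Finset.univ.filter (fun i => A i c₁ = x ∧ A i c₂ = y)).card = lam

def IsBIBD (v b κ μ : ℕ) (B : Fin b → Finset (Fin v)) : Prop :=
  (∀ i, (B i).card = κ) ∧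
  ∀ x y : Fin v, x ≠ y →
    (Finset.univ.filter (fun i => x ∈ B i ∧ y ∈ B i)).card = μ

lemma card_filter_equiv' {α β : Type*} [Fintype α] [Fintype β] [DecidableEq β]
    (e : α ≃ β) (p : β → Prop) [DecidablePred p] :
    (Finset.univ.filter (fun a => p (e a))).card = (Finset.univ.filter p).card := by
  apply Finset.card_bij (fun a _ => e a)
  · intro a ha; simp only [mem_filter, mem_univ, true_and] at ha ⊢; exact ha
  · intro a _ b _ h; exact e.injective h
  · intro b hb; simp only [mem_filter, mem_univ, true_and] at hb
    exact ⟨e.symm b, by simp [hb], by simp⟩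

lemma single_count' {n : ℕ} (M : Matrix (Fin n) (Fin n) ℤ)
    (hent : ∀ i j, M i j = 1 ∨ M i j = -1)
    (horth : M.transpose * M = (n : ℤ) • 1)
    (z : Fin n) (h0 : ∀ i, M i z = 1)
    {j : Fin n} (hj : j ≠ z)
    {a : ℤ} (ha : a = 1 ∨ a = -1) :
    2 * ((Finset.univ.filter (fun i => M i j = a)).card : ℤ) = n := by
  have hsum : ∑ i, M i j = 0 := by
    have h := congrFun (congrFun horth z) j
    simp only [Matrix.mul_apply, Matrix.transpose_apply, Matrix.smul_apply,
      Matrix.one_apply, if_neg (Ne.symm hj)] at h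
    simpa [h0] using h
  have key : ∀ i, (1 + a * M i j) = if M i j = a then 2 else 0 := by
    intro i
    rcases hent i j with h1 | h1 <;> rcases ha with rfl | rfl <;> simp [h1]
  have e1 : ∑ i, (1 + a * M i j) = (n : ℤ) + a * ∑ i, M i j := by
    rw [Finset.sum_add_distrib, Finset.mul_sum]
    simp [Finset.card_univ]
  have e2 : ∑ i, (1 + a * M i j) = 2 * ((Finset.univ.filter (fun i => M i j = a)).card : ℤ) := by
    rw [Finset.sum_congr rfl (fun i _ => key i), Finset.sum_ite, Finset.sum_const,
      Finset.sum_const_zero]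
    push_cast; ring
  rw [← e2, e1, hsum]; ring

lemma pair_count' {n : ℕ} (M : Matrix (Fin n) (Fin n) ℤ)
    (hent : ∀ i j, M i j = 1 ∨ M i j = -1)
    (horth : M.transpose * M = (n : ℤ) • 1)
    (z : Fin n) (h0 : ∀ i, M i z = 1)
    {j k : Fin n} (hjk : j ≠ k) (hj : j ≠ z) (hk : k ≠ z)
    {a b : ℤ} (ha : a = 1 ∨ a = -1) (hb : b = 1 ∨ b = -1) :
    4 * ((Finset.univ.filter (fun i => M i j = a ∧ M i k = b)).card : ℤ) = n := by
  have col : ∀ {p q : Fin n}, p ≠ q → ∑ i, M i p * M i q = 0 := by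
    intro p q hpq
    have h := congrFun (congrFun horth p) q
    simpa [Matrix.mul_apply, Matrix.transpose_apply, Matrix.smul_apply,
      Matrix.one_apply, hpq] using h
  have hsj : ∑ i, M i j = 0 := by simpa [h0] using col (Ne.symm hj)
  have hsk : ∑ i, M i k = 0 := by simpa [h0] using col (Ne.symm hk)
  have hsjk : ∑ i, M i j * M i k = 0 := col hjk
  have key : ∀ i, (1 + a * M i j) * (1 + b * M i k)
      = if M i j = a ∧ M i k = b then 4 else 0 := by
    intro i
    rcases hent i j with h1 | h1 <;> rcases hent i k with h2 | h2 <;>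
      rcases ha with rfl | rfl <;> rcases hb with rfl | rfl <;>
      norm_num [h1, h2]
  have e1 : ∑ i, (1 + a * M i j) * (1 + b * M i k)
      = (n : ℤ) + a * (∑ i, M i j) + b * (∑ i, M i k) + a * b * (∑ i, M i j * M i k) := by
    have h : ∀ i, (1 + a * M i j) * (1 + b * M i k)
        = 1 + a * M i j + b * M i k + a * b * (M i j * M i k) := by intro i; ring
    rw [Finset.sum_congr rfl (fun i _ => h i)]
    rw [Finset.sum_add_distrib, Finset.sum_add_distrib, Finset.sum_add_distrib,
      Finset.mul_sum, Finset.mul_sum, Finset.mul_sum]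
    simp [Finset.card_univ]
  have e2 : ∑ i, (1 + a * M i j) * (1 + b * M i k)
      = 4 * ((Finset.univ.filter (fun i => M i j = a ∧ M i k = b)).card : ℤ) := by
    rw [Finset.sum_congr rfl (fun i _ => key i), Finset.sum_ite, Finset.sum_const,
      Finset.sum_const_zero]
    push_cast; ring
  rw [← e2, e1, hsj, hsk, hsjk]; ring

lemma transpose_comm' {n : ℕ} (hn : 0 < n) (M : Matrix (Fin n) (Fin n) ℤ)
    (h : M * M.transpose = (n : ℤ) • 1) : M.transpose * M = (n : ℤ) • 1 := by
  set A : Matrix (Fin n) (Fin n) ℚ := M.map (Int.cast : ℤ → ℚ) with hA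
  have cast_entry : ∀ i j, A i j = ((M i j : ℤ) : ℚ) := by intro i j; simp [hA]
  have hq : A * A.transpose = (n : ℚ) • 1 := by
    ext i j
    have h1 := congrFun (congrFun h i) j
    simp only [Matrix.mul_apply, Matrix.transpose_apply, Matrix.smul_apply,
      Matrix.one_apply, smul_eq_mul] at h1 ⊢
    have h2 : ((∑ x, M i x * M j x : ℤ) : ℚ) = ((((n:ℤ) * if i = j then 1 else 0) : ℤ) : ℚ) := by
      exact_mod_cast congrArg (Int.cast : ℤ → ℚ) h1
    push_cast at h2
    simpa [cast_entry] using h2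
  have hn' : (n : ℚ) ≠ 0 := Nat.cast_ne_zero.mpr hn.ne'
  have hinv : A * ((n : ℚ)⁻¹ • A.transpose) = 1 := by
    rw [Matrix.mul_smul, hq, smul_smul, inv_mul_cancel₀ hn', one_smul]
  have hinv2 : ((n : ℚ)⁻¹ • A.transpose) * A = 1 := mul_eq_one_comm.mp hinv
  have hq2 : A.transpose * A = (n : ℚ) • 1 := by
    have h3 := congrArg (fun X => (n : ℚ) • X) hinv2
    simpa [Matrix.smul_mul, smul_smul, mul_inv_cancel₀ hn'] using h3
  ext i j
  have h1 := congrFun (congrFun hq2 i) j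
  simp only [Matrix.mul_apply, Matrix.transpose_apply, Matrix.smul_apply,
    Matrix.one_apply, smul_eq_mul, cast_entry] at h1 ⊢
  have h2 : ((∑ x, M x i * M x j : ℤ) : ℚ) = ((((n:ℤ) * if i = j then 1 else 0) : ℤ) : ℚ) := by
    push_cast
    simpa using h1
  exact_mod_cast h2


lemma main_construction {t : ℕ} (ht : 0 < t)
    (G : Matrix (Fin (8 * t + 4)) (Fin (8 * t + 4)) ℤ)
    (hGent : ∀ i j, G i j = 1 ∨ G i j = -1)
    (hGrow0 : ∀ j, G ⟨0, by omega⟩ j = 1)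
    (hGcol0 : ∀ i, G i ⟨0, by omega⟩ = 1)
    (hGG : G * G.transpose = (((8 * t + 4 : ℕ) : ℤ)) • 1) :
    (∃ b : ℕ, ∃ B : Fin b → Finset (Fin (4 * t + 1)),
      IsBIBD (4 * t + 1) b (2 * t + 1) (2 * t + 1) B) ∧
    (∃ A : Fin ((2 * t + 1) * 2 ^ 2) → Fin (4 * t + 1) → Fin 2,
      IsOA (2 * t + 1) (4 * t + 1) 2 A ∧
      ∃ r, (Finset.univ.filter (fun i => A i = r)).card = 2) := by
  have hc : (2 * t + 1) * 2 ^ 2 = 8 * t + 4 := by ring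
  set i0 : Fin (8 * t + 4) := ⟨0, by omega⟩ with hi0
  set i1 : Fin (8 * t + 4) := ⟨1, by omega⟩ with hi1
  have hi01 : i0 ≠ i1 := by
    intro h; exact absurd (congrArg Fin.val h) (by simp [hi0, hi1])
  have hGtG : G.transpose * G = (((8 * t + 4 : ℕ) : ℤ)) • 1 :=
    transpose_comm' (by omega) G hGG
  have colcount : ∀ {j k : Fin (8 * t + 4)}, j ≠ k → j ≠ i0 → k ≠ i0 →
      ∀ {a b : ℤ}, (a = 1 ∨ a = -1) → (b = 1 ∨ b = -1) →
      (Finset.univ.filter (fun i => G i j = a ∧ G i k = b)).card = 2 * t + 1 := by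
    intro j k hjk hj hk a b ha hb
    have h := pair_count' G hGent hGtG i0 hGcol0 hjk hj hk ha hb
    omega
  have horthT : G.transpose.transpose * G.transpose = (((8 * t + 4 : ℕ) : ℤ)) • 1 := by
    rw [Matrix.transpose_transpose]; exact hGG
  have rowcount : ∀ {j k : Fin (8 * t + 4)}, j ≠ k → j ≠ i0 → k ≠ i0 →
      ∀ {a b : ℤ}, (a = 1 ∨ a = -1) → (b = 1 ∨ b = -1) →
      (Finset.univ.filter (fun x => G j x = a ∧ G k x = b)).card = 2 * t + 1 := by
    intro j k hjk hj hk a b ha hb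
    have h := pair_count' G.transpose (fun i j => hGent j i) horthT i0 hGrow0 hjk hj hk ha hb
    simp only [Matrix.transpose_apply] at h
    have h' : 4 * ((Finset.univ.filter (fun x => G j x = a ∧ G k x = b)).card : ℤ)
        = ((8 * t + 4 : ℕ) : ℤ) := h
    omega
  set S : Finset (Fin (8 * t + 4)) :=
    (Finset.univ.filter (fun j => G i1 j = 1)).erase i0 with hSdef
  have hScard : S.card = 4 * t + 1 := by
    have h1 := single_count' G.transpose (fun i j => hGent j i) horthT i0 hGrow0
      (Ne.symm hi01) (Or.inl rfl)
    simp only [Matrix.transpose_apply] at h1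
    have h1' : 2 * ((Finset.univ.filter (fun x => G i1 x = 1)).card : ℤ)
        = ((8 * t + 4 : ℕ) : ℤ) := h1
    have h2 : (Finset.univ.filter (fun x => G i1 x = 1)).card = 4 * t + 2 := by omega
    have hmem : i0 ∈ Finset.univ.filter (fun x => G i1 x = 1) :=
      Finset.mem_filter.mpr ⟨Finset.mem_univ _, hGcol0 i1⟩
    rw [hSdef, Finset.card_erase_of_mem hmem, h2]
    omega
  have hmemS : ∀ {j}, j ∈ S ↔ (j ≠ i0 ∧ G i1 j = 1) := by
    intro j
    rw [hSdef, Finset.mem_erase, Finset.mem_filter]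
    simp only [Finset.mem_univ, true_and]
  set σ : Fin (4 * t + 1) → Fin (8 * t + 4) :=
    fun x => ((S.orderIsoOfFin hScard x) : Fin (8 * t + 4)) with hσdef
  have hσmem : ∀ x, σ x ∈ S := fun x => (S.orderIsoOfFin hScard x).2
  have hσinj : Function.Injective σ := fun a b h =>
    (S.orderIsoOfFin hScard).injective (Subtype.coe_injective h)
  have hσsurj : ∀ j ∈ S, ∃ x, σ x = j := by
    intro j hj
    obtain ⟨x, hx⟩ := (S.orderIsoOfFin hScard).surjective ⟨j, hj⟩
    exact ⟨x, congrArg Subtype.val hx⟩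
  have hσne0 : ∀ x, σ x ≠ i0 := fun x => (hmemS.mp (hσmem x)).1
  have hσ1 : ∀ x, G i1 (σ x) = 1 := fun x => (hmemS.mp (hσmem x)).2
  have rowidx : ∀ m : Fin (8 * t + 2), (m : ℕ) + 2 < 8 * t + 4 := by
    intro m; have := m.2; omega
  set B : Fin (8 * t + 2) → Finset (Fin (4 * t + 1)) :=
    fun m => Finset.univ.filter (fun x => G ⟨(m : ℕ) + 2, rowidx m⟩ (σ x) = -1) with hBdef
  have hrowne : ∀ m : Fin (8 * t + 2),
      (⟨(m : ℕ) + 2, rowidx m⟩ : Fin (8 * t + 4)) ≠ i0 ∧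
      (⟨(m : ℕ) + 2, rowidx m⟩ : Fin (8 * t + 4)) ≠ i1 := by
    intro m
    constructor <;> intro h <;> exact absurd (congrArg Fin.val h) (by simp [hi0, hi1])
  have hBcard : ∀ m, (B m).card = 2 * t + 1 := by
    intro m
    set i : Fin (8 * t + 4) := ⟨(m : ℕ) + 2, rowidx m⟩ with hidef
    have hne0 : i ≠ i0 := (hrowne m).1
    have hne1 : i ≠ i1 := (hrowne m).2
    have hcount : (Finset.univ.filter (fun j => G i1 j = 1 ∧ G i j = -1)).card = 2 * t + 1 :=
      rowcount (Ne.symm hne1) (Ne.symm hi01) hne0 (Or.inl rfl) (Or.inr rfl)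
    rw [hBdef, ← hcount]
    apply Finset.card_bij (fun x _ => σ x)
    · intro x hx
      simp only [Finset.mem_filter, Finset.mem_univ, true_and] at hx ⊢
      exact ⟨hσ1 x, hx⟩
    · intro a _ b _ h; exact hσinj h
    · intro j hj
      simp only [Finset.mem_filter, Finset.mem_univ, true_and] at hj
      have hjne0 : j ≠ i0 := by
        intro h; rw [h, hGcol0 i] at hj
        exact absurd hj.2 (by norm_num)
      obtain ⟨x, hx⟩ := hσsurj j (hmemS.mpr ⟨hjne0, hj.1⟩)
      exact ⟨x, by simp only [Finset.mem_filter, Finset.mem_univ, true_and, hx]; exact hj.2, hx⟩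
  have hBpair : ∀ x y : Fin (4 * t + 1), x ≠ y →
      (Finset.univ.filter (fun m => x ∈ B m ∧ y ∈ B m)).card = 2 * t + 1 := by
    intro x y hxy
    have hσxy : σ x ≠ σ y := fun h => hxy (hσinj h)
    have hcount : (Finset.univ.filter (fun i => G i (σ x) = -1 ∧ G i (σ y) = -1)).card
        = 2 * t + 1 :=
      colcount hσxy (hσne0 x) (hσne0 y) (Or.inr rfl) (Or.inr rfl)
    rw [← hcount]
    apply Finset.card_bij (s := Finset.univ.filter (fun m => x ∈ B m ∧ y ∈ B m))
      (fun m _ => (⟨(m : ℕ) + 2, rowidx m⟩ : Fin (8 * t + 4)))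
    · intro m hm
      simp only [hBdef, Finset.mem_filter, Finset.mem_univ, true_and] at hm ⊢
      exact hm
    · intro a _ b _ h
      have h2 := congrArg Fin.val h
      simp only at h2
      exact Fin.ext (by omega)
    · intro i hi
      simp only [Finset.mem_filter, Finset.mem_univ, true_and] at hi
      have hne0 : i ≠ i0 := by
        intro h; rw [h, hGrow0 (σ x)] at hi; exact absurd hi.1 (by norm_num)
      have hne1 : i ≠ i1 := by
        intro h; rw [h, hσ1 x] at hi; exact absurd hi.1 (by norm_num)
      have hval0 : (i : ℕ) ≠ 0 := by
        intro h; exact hne0 (Fin.ext (by simp [hi0, h]))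
      have hval1 : (i : ℕ) ≠ 1 := by
        intro h; exact hne1 (Fin.ext (by simp [hi1, h]))
      have hlt : (i : ℕ) - 2 < 8 * t + 2 := by have := i.2; omega
      refine ⟨⟨(i : ℕ) - 2, hlt⟩, ?_, ?_⟩
      · simp only [hBdef, Finset.mem_filter, Finset.mem_univ, true_and]
        have he : (⟨(i : ℕ) - 2 + 2, by omega⟩ : Fin (8 * t + 4)) = i := Fin.ext (by simp; omega)
        rw [he]
        exact hi
      · exact Fin.ext (by simp; omega)
  refine ⟨⟨8 * t + 2, B, hBcard, hBpair⟩, ?_⟩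
  set ψ : Fin ((2 * t + 1) * 2 ^ 2) ≃ Fin (8 * t + 4) := finCongr hc with hψdef
  set A : Fin ((2 * t + 1) * 2 ^ 2) → Fin (4 * t + 1) → Fin 2 :=
    fun i x => if G (ψ i) (σ x) = 1 then 1 else 0 with hAdef
  have e2 : ∀ v : Fin 2,
      ((if v = 1 then (1 : ℤ) else -1) = 1 ∨ (if v = 1 then (1 : ℤ) else -1) = -1) := by
    intro v; fin_cases v <;> simp
  have hAiff : ∀ i x (v : Fin 2),
      (A i x = v ↔ G (ψ i) (σ x) = (if v = 1 then (1 : ℤ) else -1)) := by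
    intro i x v
    rcases hGent (ψ i) (σ x) with h | h <;> fin_cases v <;> rw [hAdef] <;>
      simp only [h] <;> norm_num
  refine ⟨A, ?_, ?_⟩
  · intro c₁ c₂ hc12 x y
    have hσc : σ c₁ ≠ σ c₂ := fun h => hc12 (hσinj h)
    have hcount := colcount hσc (hσne0 c₁) (hσne0 c₂) (e2 x) (e2 y)
    have hfe : Finset.univ.filter (fun i => A i c₁ = x ∧ A i c₂ = y)
        = Finset.univ.filter (fun i => G (ψ i) (σ c₁) = (if x = 1 then (1:ℤ) else -1)
            ∧ G (ψ i) (σ c₂) = (if y = 1 then (1:ℤ) else -1)) :=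
      Finset.filter_congr (fun i _ => and_congr (hAiff i c₁ x) (hAiff i c₂ y))
    rw [hfe, card_filter_equiv' ψ (fun i => G i (σ c₁) = (if x = 1 then (1:ℤ) else -1)
      ∧ G i (σ c₂) = (if y = 1 then (1:ℤ) else -1))]
    exact hcount
  · refine ⟨fun _ => 1, ?_⟩
    have key : Finset.univ.filter (fun i => A i = fun _ => (1 : Fin 2))
        = {ψ.symm i0, ψ.symm i1} := by
      ext i
      simp only [Finset.mem_filter, Finset.mem_univ, true_and, Finset.mem_insert,
        Finset.mem_singleton]
      rw [funext_iff]
      have hiff : (∀ x, A i x = 1) ↔ (∀ x, G (ψ i) (σ x) = 1) := by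
        constructor <;> intro h x
        · have h3 := (hAiff i x 1).mp (h x); simpa using h3
        · exact (hAiff i x 1).mpr (by simpa using h x)
      rw [hiff]
      constructor
      · intro h
        by_contra hcon
        push_neg at hcon
        have hne0 : ψ i ≠ i0 := by
          intro he; exact hcon.1 (by rw [← he, Equiv.symm_apply_apply])
        have hne1 : ψ i ≠ i1 := by
          intro he; exact hcon.2 (by rw [← he, Equiv.symm_apply_apply])
        have hcount : (Finset.univ.filter (fun j => G i1 j = 1 ∧ G (ψ i) j = 1)).card
            = 2 * t + 1 := rowcount (Ne.symm hne1) (Ne.symm hi01) hne0 (Or.inl rfl) (Or.inl rfl)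
        have hsub : S ⊆ Finset.univ.filter (fun j => G i1 j = 1 ∧ G (ψ i) j = 1) := by
          intro j hj
          obtain ⟨x, hx⟩ := hσsurj j hj
          exact Finset.mem_filter.mpr ⟨Finset.mem_univ _, (hmemS.mp hj).2, by rw [← hx]; exact h x⟩
        have hle := Finset.card_le_card hsub
        rw [hScard, hcount] at hle
        omega
      · rintro (rfl | rfl) x
        · rw [Equiv.apply_symm_apply]; exact hGrow0 (σ x)
        · rw [Equiv.apply_symm_apply]; exact hσ1 x
    rw [key, Finset.card_insert_of_notMem (by
      simp only [Finset.mem_singleton]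
      intro h
      exact hi01 (ψ.symm.injective h)), Finset.card_singleton]

theorem stmt7 (t : ℕ) (ht : 0 < t)
    (H : Matrix (Fin (8 * t + 4)) (Fin (8 * t + 4)) ℤ)
    (hent : ∀ i j, H i j = 1 ∨ H i j = -1)
    (hH : H * H.transpose = ((8 * t + 4 : ℤ)) • (1 : Matrix (Fin (8 * t + 4)) (Fin (8 * t + 4)) ℤ)) :
    (∃ b : ℕ, ∃ B : Fin b → Finset (Fin (4 * t + 1)),
      IsBIBD (4 * t + 1) b (2 * t + 1) (2 * t + 1) B) ∧
    (∃ A : Fin ((2 * t + 1) * 2 ^ 2) → Fin (4 * t + 1) → Fin 2,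
      IsOA (2 * t + 1) (4 * t + 1) 2 A ∧
      ∃ r, (Finset.univ.filter (fun i => A i = r)).card = 2) := by
  have sq1 : ∀ {x : ℤ}, (x = 1 ∨ x = -1) → x * x = 1 := by rintro x (rfl | rfl) <;> norm_num
  have i0 : Fin (8 * t + 4) := ⟨0, by omega⟩
  set G : Matrix (Fin (8 * t + 4)) (Fin (8 * t + 4)) ℤ :=
    fun i j => H i j * H i ⟨0, by omega⟩ * H ⟨0, by omega⟩ j * H ⟨0, by omega⟩ ⟨0, by omega⟩
    with hGdef
  have hGent : ∀ i j, G i j = 1 ∨ G i j = -1 := by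
    intro i j
    rcases hent i j with h1 | h1 <;> rcases hent i ⟨0, by omega⟩ with h2 | h2 <;>
      rcases hent ⟨0, by omega⟩ j with h3 | h3 <;>
      rcases hent ⟨0, by omega⟩ ⟨0, by omega⟩ with h4 | h4 <;>
      simp only [hGdef, h1, h2, h3, h4] <;> norm_num
  have hGrow0 : ∀ j, G ⟨0, by omega⟩ j = 1 := by
    intro j
    have h1 := sq1 (hent ⟨0, by omega⟩ j)
    have h2 := sq1 (hent ⟨0, by omega⟩ ⟨0, by omega⟩)
    simp only [hGdef]
    linear_combination (H ⟨0, by omega⟩ ⟨0, by omega⟩ * H ⟨0, by omega⟩ ⟨0, by omega⟩) * h1 + h2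
  have hGcol0 : ∀ i, G i ⟨0, by omega⟩ = 1 := by
    intro i
    have h1 := sq1 (hent i ⟨0, by omega⟩)
    have h2 := sq1 (hent ⟨0, by omega⟩ ⟨0, by omega⟩)
    simp only [hGdef]
    linear_combination (H ⟨0, by omega⟩ ⟨0, by omega⟩ * H ⟨0, by omega⟩ ⟨0, by omega⟩) * h1 + h2
  have hHrow : ∀ i k, ∑ j, H i j * H k j = if i = k then (((8 * t + 4 : ℕ)) : ℤ) else 0 := by
    intro i k
    have h := congrFun (congrFun hH i) k
    simp only [Matrix.mul_apply, Matrix.transpose_apply, Matrix.smul_apply,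
      Matrix.one_apply, smul_eq_mul, mul_ite, mul_one, mul_zero] at h
    rw [h]
    split_ifs <;> push_cast <;> ring
  have hGG : G * G.transpose = (((8 * t + 4 : ℕ) : ℤ)) • 1 := by
    ext i k
    simp only [Matrix.mul_apply, Matrix.transpose_apply, Matrix.smul_apply,
      Matrix.one_apply, smul_eq_mul, mul_ite, mul_one, mul_zero]
    have e : ∀ j, G i j * G k j
        = (H i ⟨0, by omega⟩ * H k ⟨0, by omega⟩) * (H i j * H k j) := by
      intro j
      have s1 := sq1 (hent ⟨0, by omega⟩ j)
      have s2 := sq1 (hent ⟨0, by omega⟩ ⟨0, by omega⟩)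
      simp only [hGdef]
      linear_combination (H i j * H i ⟨0, by omega⟩ * H k j * H k ⟨0, by omega⟩ *
          (H ⟨0, by omega⟩ j * H ⟨0, by omega⟩ j)) * s2
        + (H i j * H i ⟨0, by omega⟩ * H k j * H k ⟨0, by omega⟩) * s1
    rw [Finset.sum_congr rfl (fun j _ => e j), ← Finset.mul_sum, hHrow]
    split_ifs with h
    · subst h
      rw [sq1 (hent i ⟨0, by omega⟩), one_mul]
    · rw [mul_zero]
  exact main_construction ht G hGent hGrow0 hGcol0 hGG
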